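/- Let d ≥ 1, let X ⊂ ℝ^d be a finite set with |X| = l, and let D ⊂ S^{d−1} be a finite set of unit vectors in general position, meaning that every subset of D of cardinality d is linearly independent. Let y ∈ ℝ^d and suppose there is a subset V' ⊆ D with |V'| ≥ (d−1)·l + 1 such that for every v ∈ V' there exists x ∈ X with ⟨v, y⟩ = ⟨v, x⟩ (i.e., y lies on the hyperplane with normal v passing through x). Then y ∈ X. -/

import Mathlib

open scoped RealInnerProductSpace

/-- pigeonhole hyperplane lemma. If `X ⊂ ℝ^d` has `l` points, `D` is a finite
set of unit vectors in general position (every `d` of them are linearly independent),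
and at least `(d-1)*l + 1` hyperplanes `H(v, x)` with `v ∈ D`, `x ∈ X` pass through `y`,
then `y ∈ X`. -/
theorem stmt0 (d l : ℕ) (hd : 1 ≤ d)
    (X : Finset (EuclideanSpace ℝ (Fin d))) (hXcard : X.card = l)
    (D : Finset (EuclideanSpace ℝ (Fin d)))
    (hDunit : ∀ v ∈ D, ‖v‖ = 1)
    (hgen : ∀ S : Finset (EuclideanSpace ℝ (Fin d)), S ⊆ D → S.card = d →
      LinearIndependent ℝ (fun v : S => (v : EuclideanSpace ℝ (Fin d))))
    (y : EuclideanSpace ℝ (Fin d))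
    (V' : Finset (EuclideanSpace ℝ (Fin d))) (hV'sub : V' ⊆ D)
    (hV'card : (d - 1) * l + 1 ≤ V'.card)
    (hplane : ∀ v ∈ V', ∃ x ∈ X, ⟪v, y⟫ = ⟪v, x⟫) :
    y ∈ X := by
  classical
  choose! f hfX hfeq using hplane
  have hlt : X.card * (d - 1) < V'.card := by
    rw [hXcard]; calc l * (d - 1) = (d - 1) * l := by ring
      _ < (d - 1) * l + 1 := Nat.lt_succ_self _
      _ ≤ V'.card := hV'card
  obtain ⟨x, hxX, hxcard⟩ :=
    Finset.exists_lt_card_fiber_of_mul_lt_card_of_maps_to hfX hlt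
  set S := V'.filter (fun v => f v = x) with hS
  have hScard : d ≤ S.card := by omega
  obtain ⟨T, hTS, hTcard⟩ := Finset.exists_subset_card_eq hScard
  have hTV' : T ⊆ V' := hTS.trans (Finset.filter_subset _ _)
  have hli := hgen T (hTV'.trans hV'sub) hTcard
  have hTne : T.Nonempty := Finset.card_pos.mp (by omega)
  haveI : Nonempty T := ⟨⟨hTne.choose, hTne.choose_spec⟩⟩
  have hspan : Submodule.span ℝ (T : Set (EuclideanSpace ℝ (Fin d))) = ⊤ := by
    have := hli.span_eq_top_of_card_eq_finrank
      (by simp [hTcard, finrank_euclideanSpace_fin])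
    simpa using this
  have horth : ∀ v ∈ T, ⟪y - x, v⟫ = 0 := by
    intro v hv
    have hvV' : v ∈ V' := hTV' hv
    have hfx : f v = x := (Finset.mem_filter.mp (hTS hv)).2
    have := hfeq v hvV'
    rw [hfx] at this
    rw [real_inner_comm, inner_sub_right, this, sub_self]
  have hzero : y - x = 0 := by
    have hsub : (T : Set (EuclideanSpace ℝ (Fin d))) ⊆
        (LinearMap.ker (innerSL ℝ (y - x)).toLinearMap : Submodule ℝ (EuclideanSpace ℝ (Fin d))) := by
      intro v hv
      simp only [SetLike.mem_coe, LinearMap.mem_ker, ContinuousLinearMap.coe_coe, coe_innerSL_apply, innerSL_apply_apply]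
      exact horth v hv
    have hle := Submodule.span_le.mpr hsub
    rw [hspan, top_le_iff] at hle
    have : ⟪y - x, y - x⟫ = 0 := by
      have : (y - x) ∈ LinearMap.ker (innerSL ℝ (y - x)).toLinearMap := hle ▸ Submodule.mem_top
      simpa only [LinearMap.mem_ker, ContinuousLinearMap.coe_coe, coe_innerSL_apply, innerSL_apply_apply] using this
    exact inner_self_eq_zero.mp this
  have : y = x := sub_eq_zero.mp hzero
  rw [this]; exact hxX
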